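/- Let G be a finite group, F a field of characteristic 2 (more generally any field), W a finite-dimensional F[G]-module with 𝔞 the augmentation ideal of F[G], and W_k = {x ∈ W : 𝔞^k x = 0} the associated filtration. Fix k ≥ 0 and let H = {h ∈ G : (h-1)(W_{k+2}) ⊆ W_k}. Then G/H is an elementary abelian 2-group (when G is a 2-group), say of rank r, and dim_F W_{k+2}/W_{k+1} ≤ r · dim_F W_{k+1}/W_k. -/

import Mathlib

/-- The filtration `W_k = {x ∈ W : 𝔞^k x = 0}` associated to the augmentation ideal `𝔞` of
`F[G]`: since `𝔞` is generated by the elements `g - 1`, the condition `𝔞^k x = 0` is that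
every product `(g₁-1)⋯(g_k-1)` annihilates `x`. -/
def augFiltration {F G W : Type*} [CommRing F] [Group G] [AddCommGroup W] [Module F W]
    (ρ : Representation F G W) (k : ℕ) : Submodule F W where
  carrier := {x | ∀ l : List G, l.length = k →
    (l.map fun g => (ρ g - 1 : Module.End F W)).prod x = 0}
  add_mem' := by
    intro a b ha hb l hl
    simp [map_add, ha l hl, hb l hl]
  zero_mem' := by intro l hl; simp
  smul_mem' := by
    intro c a ha l hl
    simp [map_smul, ha l hl]

section Aux
variable {F G W : Type*} [CommRing F] [Group G] [AddCommGroup W] [Module F W]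
  (ρ : Representation F G W)

lemma augFiltration_step {m : ℕ} {x : W} (hx : x ∈ augFiltration ρ (m + 1)) (g : G) :
    ρ g x - x ∈ augFiltration ρ m := by
  intro l hl
  have h := hx (l.concat g) (by simp [hl])
  simpa [List.map_concat, List.prod_concat, Module.End.mul_apply] using h

lemma augFiltration_of_step {m : ℕ} {x : W}
    (hx : ∀ g : G, ρ g x - x ∈ augFiltration ρ m) : x ∈ augFiltration ρ (m + 1) := by
  intro l hl
  rcases List.eq_nil_or_concat l with rfl | ⟨l', a, rfl⟩
  · simp at hl
  · have hl' : l'.length = m := by simpa using hl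
    have h := hx a l' hl'
    simpa [List.map_concat, List.prod_concat, Module.End.mul_apply] using h

lemma augFiltration_mono_succ (m : ℕ) :
    augFiltration ρ m ≤ augFiltration ρ (m + 1) := by
  intro x hx l hl
  rcases l with _ | ⟨a, l'⟩
  · simp at hl
  · have hl' : l'.length = m := by simpa using hl
    simp [Module.End.mul_apply, hx l' hl']

lemma augFiltration_prod_conj (g : G) (l : List G) :
    ((l.map fun h => (ρ h - 1 : Module.End F W)).prod) * (ρ g : Module.End F W)
      = (ρ g : Module.End F W) *
        (((l.map fun h => g⁻¹ * h * g).map fun h => (ρ h - 1 : Module.End F W)).prod) := by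
  induction l with
  | nil => simp
  | cons a l ih =>
      have key : ((ρ a - 1 : Module.End F W)) * ρ g
          = (ρ g : Module.End F W) * (ρ (g⁻¹ * a * g) - 1) := by
        have : (ρ a : Module.End F W) * ρ g = ρ g * ρ (g⁻¹ * a * g) := by
          rw [← map_mul, ← map_mul]; congr 1; group
        rw [sub_mul, mul_sub, mul_one, one_mul, this]
      simp only [List.map_cons, List.prod_cons]
      rw [mul_assoc, ih, ← mul_assoc, key, mul_assoc]

lemma augFiltration_stable {m : ℕ} (g : G) {x : W} (hx : x ∈ augFiltration ρ m) :
    ρ g x ∈ augFiltration ρ m := by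
  intro l hl
  have h := congrArg (fun f : Module.End F W => f x) (augFiltration_prod_conj ρ g l)
  simp only [Module.End.mul_apply] at h
  rw [h, hx _ (by simp [hl]), map_zero]

end Aux

/-- Let `G` be a finite 2-group, `F` a field of characteristic 2, `W` a finite-dimensional
`F[G]`-module with augmentation filtration `W_k`, and
`H = {h ∈ G : (h-1)(W_{k+2}) ⊆ W_k}`.  Then `G/H` is elementary abelian (`H` is normal,
every square lies in `H` and every commutator lies in `H`), and if it has rank `r`
(i.e. `|G/H| = 2^r`) then `dim_F W_{k+2}/W_{k+1} ≤ r · dim_F W_{k+1}/W_k`. -/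
theorem augFiltration_growth_bound
    (F G W : Type*) [Field F] [CharP F 2] [Group G] [Finite G]
    (hG : IsPGroup 2 G)
    [AddCommGroup W] [Module F W] [FiniteDimensional F W]
    (ρ : Representation F G W) (k : ℕ)
    (H : Subgroup G)
    (hH : ∀ h : G, h ∈ H ↔ ∀ x ∈ augFiltration ρ (k + 2), ρ h x - x ∈ augFiltration ρ k) :
    (∀ g h : G, h ∈ H → g * h * g⁻¹ ∈ H) ∧
    (∀ g : G, g * g ∈ H) ∧
    (∀ g₁ g₂ : G, g₁ * g₂ * g₁⁻¹ * g₂⁻¹ ∈ H) ∧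
    ∀ r : ℕ, Nat.card (G ⧸ H) = 2 ^ r →
      Module.finrank F
          (↥(augFiltration ρ (k + 2)) ⧸
            (augFiltration ρ (k + 1)).comap (augFiltration ρ (k + 2)).subtype) ≤
        r * Module.finrank F
          (↥(augFiltration ρ (k + 1)) ⧸
            (augFiltration ρ k).comap (augFiltration ρ (k + 1)).subtype) := by
  have two_smul_zero : ∀ (y : W), y + y = 0 := by
    intro y
    have h2 : ((2 : ℕ) : F) = 0 := by
      exact_mod_cast CharP.cast_eq_zero F 2
    calc y + y = ((2 : ℕ) : F) • y := by push_cast; rw [← one_smul F y, ← add_smul]; norm_num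
    _ = 0 := by rw [h2, zero_smul]
  -- normality
  have hnorm : ∀ g h : G, h ∈ H → g * h * g⁻¹ ∈ H := by
    intro g h hh
    rw [hH]
    intro x hx
    have hy : ρ g⁻¹ x ∈ augFiltration ρ (k + 2) := augFiltration_stable ρ _ hx
    have h1 : ρ h (ρ g⁻¹ x) - ρ g⁻¹ x ∈ augFiltration ρ k := (hH h).mp hh _ hy
    have h2 : ρ g (ρ h (ρ g⁻¹ x) - ρ g⁻¹ x) ∈ augFiltration ρ k :=
      augFiltration_stable ρ _ h1
    have : ρ g (ρ h (ρ g⁻¹ x) - ρ g⁻¹ x) = ρ (g * h * g⁻¹) x - x := by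
      rw [map_sub]
      congr 1
      · simp only [← Module.End.mul_apply, ← map_mul]
        congr 2
        group
      · rw [← Module.End.mul_apply, ← map_mul, mul_inv_cancel, map_one, Module.End.one_apply]
    rwa [this] at h2
  -- squares
  have hsq : ∀ g : G, g * g ∈ H := by
    intro g
    rw [hH]
    intro x hx
    have hd : ρ g x - x ∈ augFiltration ρ (k + 1) := augFiltration_step ρ hx g
    have h1 : ρ g (ρ g x - x) - (ρ g x - x) ∈ augFiltration ρ k := augFiltration_step ρ hd g
    have key : ρ (g * g) x - x
        = (ρ g (ρ g x - x) - (ρ g x - x)) + ((ρ g x - x) + (ρ g x - x)) := by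
      simp only [map_sub, map_mul, Module.End.mul_apply]
      abel
    rw [key, two_smul_zero (ρ g x - x), add_zero]
    exact h1
  -- commutators
  have hcomm : ∀ g₁ g₂ : G, g₁ * g₂ * g₁⁻¹ * g₂⁻¹ ∈ H := by
    intro g₁ g₂
    rw [hH]
    intro x hx
    set y : W := ρ g₁⁻¹ (ρ g₂⁻¹ x) with hy
    have hym : y ∈ augFiltration ρ (k + 2) :=
      augFiltration_stable ρ _ (augFiltration_stable ρ _ hx)
    have hu : ρ g₂ y - y ∈ augFiltration ρ (k + 1) := augFiltration_step ρ hym g₂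
    have hv : ρ g₁ y - y ∈ augFiltration ρ (k + 1) := augFiltration_step ρ hym g₁
    have h1 : ρ g₁ (ρ g₂ y - y) - (ρ g₂ y - y) ∈ augFiltration ρ k := augFiltration_step ρ hu g₁
    have h2 : ρ g₂ (ρ g₁ y - y) - (ρ g₁ y - y) ∈ augFiltration ρ k := augFiltration_step ρ hv g₂
    have hx' : x = ρ g₂ (ρ g₁ y) := by
      rw [hy]
      simp [← Module.End.mul_apply, ← map_mul]
    have key : ρ (g₁ * g₂ * g₁⁻¹ * g₂⁻¹) x - x
        = (ρ g₁ (ρ g₂ y - y) - (ρ g₂ y - y)) - (ρ g₂ (ρ g₁ y - y) - (ρ g₁ y - y)) := by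
      have hl : ρ (g₁ * g₂ * g₁⁻¹ * g₂⁻¹) x = ρ g₁ (ρ g₂ y) := by
        rw [hy]
        simp only [← Module.End.mul_apply, ← map_mul]
        congr 1
        group
      rw [hl]
      rw [hx']
      simp only [map_sub]
      abel
    rw [key]
    exact sub_mem h1 h2
  refine ⟨hnorm, hsq, hcomm, ?_⟩
  -- Part 4: the dimension bound
  intro r hr
  classical
  haveI : H.Normal := ⟨fun n hn g => hnorm g n hn⟩
  -- every element of G ⧸ H squares to 1
  have hsqV : ∀ v : G ⧸ H, v * v = 1 := by
    intro v
    induction v using QuotientGroup.induction_on with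
    | _ g =>
      rw [← QuotientGroup.mk_mul, QuotientGroup.eq_one_iff]
      exact hsq g
  letI : CommGroup (G ⧸ H) :=
    { (inferInstance : Group (G ⧸ H)) with
      mul_comm := by
        intro a b
        calc a * b = (a * b)⁻¹ := (inv_eq_of_mul_eq_one_right (hsqV (a * b))).symm
        _ = b⁻¹ * a⁻¹ := mul_inv_rev a b
        _ = b * a := by
            rw [inv_eq_of_mul_eq_one_right (hsqV a), inv_eq_of_mul_eq_one_right (hsqV b)] }
  letI : Module (ZMod 2) (Additive (G ⧸ H)) :=
    AddCommGroup.zmodModule (by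
      intro v
      show 2 • v = 0
      rw [two_smul]
      exact hsqV v.toMul)
  haveI : Finite (G ⧸ H) := Quotient.finite _
  haveI : Finite (Additive (G ⧸ H)) := Finite.of_equiv _ Additive.ofMul
  letI : Fintype (Additive (G ⧸ H)) := Fintype.ofFinite _
  haveI : Module.Finite (ZMod 2) (Additive (G ⧸ H)) :=
    (Module.finite_iff_finite (R := ZMod 2)).mpr inferInstance
  have hrank : Module.finrank (ZMod 2) (Additive (G ⧸ H)) = r := by
    have h1 : Fintype.card (Additive (G ⧸ H))
        = 2 ^ Module.finrank (ZMod 2) (Additive (G ⧸ H)) := by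
      rw [Module.card_eq_pow_finrank (K := ZMod 2), ZMod.card]
    have h2 : Fintype.card (Additive (G ⧸ H)) = 2 ^ r := by
      rw [← Nat.card_eq_fintype_card, Nat.card_congr (Additive.toMul (α := G ⧸ H))]
      exact hr
    exact (Nat.pow_right_injective (le_refl 2) (h1.symm.trans h2))
  let b : Module.Basis (Fin r) (ZMod 2) (Additive (G ⧸ H)) :=
    Module.finBasisOfFinrankEq (ZMod 2) _ hrank
  -- the map φ
  set p1 : Submodule F (augFiltration ρ (k + 1)) :=
    (augFiltration ρ k).comap (augFiltration ρ (k + 1)).subtype with hp1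
  set p2 : Submodule F (augFiltration ρ (k + 2)) :=
    (augFiltration ρ (k + 1)).comap (augFiltration ρ (k + 2)).subtype with hp2
  have hmemφ : ∀ (x : augFiltration ρ (k + 2)) (g : G),
      ρ g (x : W) - (x : W) ∈ augFiltration ρ (k + 1) :=
    fun x g => augFiltration_step ρ x.2 g
  set φ : ↥(augFiltration ρ (k + 2)) → G → ↥(augFiltration ρ (k + 1)) ⧸ p1 :=
    fun x g => Submodule.Quotient.mk ⟨ρ g (x : W) - (x : W), hmemφ x g⟩ with hφ
  have hφmul : ∀ (x : augFiltration ρ (k + 2)) (g₁ g₂ : G),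
      φ x (g₁ * g₂) = φ x g₁ + φ x g₂ := by
    intro x g₁ g₂
    rw [hφ]
    simp only
    rw [← Submodule.Quotient.mk_add, Submodule.Quotient.eq]
    have key : (ρ (g₁ * g₂) (x : W) - (x : W))
        - ((ρ g₁ (x : W) - (x : W)) + (ρ g₂ (x : W) - (x : W)))
        = ρ g₁ (ρ g₂ (x : W) - (x : W)) - (ρ g₂ (x : W) - (x : W)) := by
      simp only [map_mul, Module.End.mul_apply, map_sub]
      abel
    show (ρ (g₁ * g₂) (x : W) - (x : W))
        - ((ρ g₁ (x : W) - (x : W)) + (ρ g₂ (x : W) - (x : W))) ∈ augFiltration ρ k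
    rw [key]
    exact augFiltration_step ρ (hmemφ x g₂) g₁
  have hφH : ∀ (x : augFiltration ρ (k + 2)) (h : G), h ∈ H → φ x h = 0 := by
    intro x h hh
    rw [hφ]
    simp only
    rw [Submodule.Quotient.mk_eq_zero]
    show ρ h (x : W) - (x : W) ∈ augFiltration ρ k
    exact (hH h).mp hh _ x.2
  -- injectivity core
  have hφinj : ∀ x : ↥(augFiltration ρ (k + 2)),
      (∀ i : Fin r, φ x (((b i).toMul).out) = 0) →
      (x : W) ∈ augFiltration ρ (k + 1) := by
    intro x hbz
    let M : G →* Multiplicative (↥(augFiltration ρ (k + 1)) ⧸ p1) :=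
      MonoidHom.mk' (fun g => Multiplicative.ofAdd (φ x g))
        (fun a c => by
          show Multiplicative.ofAdd (φ x (a * c))
            = Multiplicative.ofAdd (φ x a) * Multiplicative.ofAdd (φ x c)
          rw [hφmul x a c]
          rfl)
    let f : G ⧸ H →* Multiplicative (↥(augFiltration ρ (k + 1)) ⧸ p1) :=
      QuotientGroup.lift H M (fun h hh => by
        show Multiplicative.ofAdd (φ x h) = 1
        rw [hφH x h hh]
        rfl)
    have hf : ∀ v : G ⧸ H, f v = 1 := by
      have key : ∀ v : Additive (G ⧸ H), f v.toMul = 1 := by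
        intro v
        have hv : v ∈ Submodule.span (ZMod 2) (Set.range ⇑b) := by
          rw [b.span_eq]; trivial
        refine Submodule.span_induction
          (p := fun y _ => f (Additive.toMul y) = 1) ?_ ?_ ?_ ?_ hv
        · rintro y ⟨i, rfl⟩
          rw [← QuotientGroup.out_eq' (Additive.toMul (b i))]
          show M _ = 1
          show Multiplicative.ofAdd (φ x (((b i).toMul).out)) = 1
          rw [hbz i]
          rfl
        · exact map_one f
        · intro y z _ _ hy hz
          have : Additive.toMul (y + z) = Additive.toMul y * Additive.toMul z := rfl
          rw [this, map_mul, hy, hz, mul_one]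
        · intro c y hy hcy
          rcases (by decide : ∀ c : ZMod 2, c = 0 ∨ c = 1) c with rfl | rfl
          · rw [zero_smul]
            exact map_one f
          · rw [one_smul]
            exact hcy
      intro v
      exact key (Additive.ofMul v)
    have hφz : ∀ g : G, φ x g = 0 := by
      intro g
      have h1 : f (QuotientGroup.mk g) = 1 := hf _
      have h2 : Multiplicative.ofAdd (φ x g) = 1 := h1
      exact ofAdd_eq_one.mp h2
    refine augFiltration_of_step ρ (fun g => ?_)
    have h3 := hφz g
    rw [hφ] at h3
    simp only at h3
    rw [Submodule.Quotient.mk_eq_zero] at h3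
    exact h3
  -- the linear map
  let Φ : ↥(augFiltration ρ (k + 2)) →ₗ[F]
      (Fin r → ↥(augFiltration ρ (k + 1)) ⧸ p1) :=
    { toFun := fun x i => φ x (((b i).toMul).out)
      map_add' := by
        intro x y
        funext i
        show φ (x + y) _ = φ x _ + φ y _
        rw [hφ]
        simp only
        rw [← Submodule.Quotient.mk_add]
        congr 1
        apply Subtype.ext
        show ρ _ ((x : W) + (y : W)) - ((x : W) + (y : W))
            = (ρ _ (x : W) - (x : W)) + (ρ _ (y : W) - (y : W))
        rw [map_add]
        abel
      map_smul' := by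
        intro c x
        funext i
        show φ (c • x) _ = c • φ x _
        rw [hφ]
        simp only
        rw [← Submodule.Quotient.mk_smul]
        congr 1
        apply Subtype.ext
        show ρ _ (c • (x : W)) - c • (x : W) = c • (ρ _ (x : W) - (x : W))
        rw [map_smul, smul_sub] }
  have hker1 : p2 ≤ LinearMap.ker Φ := by
    intro x hx
    rw [LinearMap.mem_ker]
    funext i
    show φ x _ = 0
    rw [hφ]
    simp only
    rw [Submodule.Quotient.mk_eq_zero]
    show ρ _ (x : W) - (x : W) ∈ augFiltration ρ k
    exact augFiltration_step ρ hx _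
  have hker2 : LinearMap.ker Φ ≤ p2 := by
    intro x hx
    rw [LinearMap.mem_ker] at hx
    have h1 : ∀ i : Fin r, φ x (((b i).toMul).out) = 0 := fun i => congrFun hx i
    exact hφinj x h1
  have hinj : Function.Injective (p2.liftQ Φ hker1) := by
    rw [← LinearMap.ker_eq_bot]
    exact Submodule.ker_liftQ_eq_bot p2 Φ hker1 hker2
  calc Module.finrank F (↥(augFiltration ρ (k + 2)) ⧸ p2)
      ≤ Module.finrank F (Fin r → ↥(augFiltration ρ (k + 1)) ⧸ p1) :=
        LinearMap.finrank_le_finrank_of_injective hinj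
    _ = r * Module.finrank F (↥(augFiltration ρ (k + 1)) ⧸ p1) := by
        rw [Module.finrank_pi_fintype]
        simp [Finset.sum_const, Fintype.card_fin, mul_comm]
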